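/- arXiv:1504.02118 — 5 statements merged into one kernel-verified Lean document; each statement's English description precedes it below -/
import Mathlib

section
/- If V_s is an n×n Vandermonde matrix with some knot of absolute value s_+ > 1, then its condition number satisfies κ(V_s) ≥ s_+^{n-1}/√n. In particular κ(V_s) grows exponentially in n if s_+ ≥ ν for a fixed ν > 1. -/
open Matrix Complex BigOperators Finset

noncomputable def specNorm {m n : ℕ} (A : Matrix (Fin m) (Fin n) ℂ) : ℝ :=
  ‖LinearMap.toContinuousLinearMap (Matrix.toEuclideanLin A)‖

noncomputable def condNum {n : ℕ} (A : Matrix (Fin n) (Fin n) ℂ) : ℝ :=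
  specNorm A * specNorm A⁻¹

noncomputable def singularValue {m n : ℕ} (j : ℕ) (A : Matrix (Fin m) (Fin n) ℂ) : ℝ :=
  ⨅ N : {N : Matrix (Fin m) (Fin n) ℂ // N.rank < j}, specNorm (A - N.1)

lemma coord_le_norm {m : ℕ} (x : EuclideanSpace ℂ (Fin m)) (i : Fin m) :
    ‖x i‖ ≤ ‖x‖ := by
  rw [EuclideanSpace.norm_eq]
  calc ‖x i‖ = Real.sqrt (‖x i‖ ^ 2) := (Real.sqrt_sq (norm_nonneg _)).symm
    _ ≤ _ := Real.sqrt_le_sqrt (Finset.single_le_sum (f := fun j => ‖x j‖ ^ 2)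
        (fun j _ => sq_nonneg _) (Finset.mem_univ i))

/-- If s_+ = max_i |s_i| > 1 then κ(V_s) ≥ s_+^{n-1}/√n. -/
theorem vandermonde_cond_lower_large_knot (n : ℕ) (hn : 0 < n) (s : Fin n → ℂ)
    (hdet : (Matrix.vandermonde s).det ≠ 0)
    (hplus : 1 < ⨆ i : Fin n, ‖s i‖) :
    condNum (Matrix.vandermonde s) ≥
      (⨆ i : Fin n, ‖s i‖) ^ (n - 1) / Real.sqrt n := by
  have : Nonempty (Fin n) := ⟨⟨0, hn⟩⟩
  set t := ⨆ i : Fin n, ‖s i‖ with ht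
  obtain ⟨i₀, hi₀⟩ := exists_eq_ciSup_of_finite (f := fun i => ‖s i‖)
  set V := Matrix.vandermonde s with hV
  set f := LinearMap.toContinuousLinearMap (Matrix.toEuclideanLin V) with hf
  set g := LinearMap.toContinuousLinearMap (Matrix.toEuclideanLin V⁻¹) with hg
  have hsqrt : (0:ℝ) < Real.sqrt n := Real.sqrt_pos.mpr (by exact_mod_cast hn)
  -- f applied to a single basis vector
  have happ : ∀ (A : Matrix (Fin n) (Fin n) ℂ) (x : EuclideanSpace ℂ (Fin n)) (i : Fin n),
      (LinearMap.toContinuousLinearMap (Matrix.toEuclideanLin A)) x i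
        = (A *ᵥ (WithLp.equiv 2 (Fin n → ℂ) x)) i := by
    intro A x i
    rfl
  -- Step A : ‖f‖ ≥ t^(n-1)
  have normA : t ^ (n-1) ≤ ‖f‖ := by
    set e := EuclideanSpace.single (⟨n-1, Nat.sub_lt hn one_pos⟩ : Fin n) (1:ℂ)
    have he : ‖e‖ = 1 := by simp [e, EuclideanSpace.norm_single]
    have hcoord : (f e) i₀ = s i₀ ^ (n-1) := by
      rw [happ]
      have : (WithLp.equiv 2 (Fin n → ℂ)) e = Pi.single ⟨n-1, Nat.sub_lt hn one_pos⟩ 1 := rfl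
      rw [this, Matrix.mulVec_single]
      simp [V, Matrix.vandermonde]
    have h1 : t ^ (n-1) = ‖(f e) i₀‖ := by
      rw [hcoord, ht, ← hi₀]
      simp [norm_pow]
    calc t ^ (n-1) = ‖(f e) i₀‖ := h1
      _ ≤ ‖f e‖ := coord_le_norm _ _
      _ ≤ ‖f‖ * ‖e‖ := f.le_opNorm e
      _ = ‖f‖ := by rw [he, mul_one]
  -- Step B : ‖g‖ ≥ 1/√n
  have normB : 1 / Real.sqrt n ≤ ‖g‖ := by
    set e := EuclideanSpace.single (⟨0, hn⟩ : Fin n) (1:ℂ)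
    have he : ‖e‖ = 1 := by simp [e, EuclideanSpace.norm_single]
    have hfe : ∀ i, (f e) i = 1 := by
      intro i
      rw [happ]
      have : (WithLp.equiv 2 (Fin n → ℂ)) e = Pi.single ⟨0, hn⟩ 1 := rfl
      rw [this, Matrix.mulVec_single]
      simp [V, Matrix.vandermonde]
    have hnorm_fe : ‖f e‖ = Real.sqrt n := by
      rw [EuclideanSpace.norm_eq]
      congr 1
      simp [hfe]
    have hgf : g (f e) = e := by
      have : Matrix.toEuclideanLin V⁻¹ (Matrix.toEuclideanLin V e) = e := by
        simp only [Matrix.toEuclideanLin_apply, Equiv.apply_symm_apply,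
          Matrix.mulVec_mulVec, Matrix.nonsing_inv_mul V hdet.isUnit,
          Matrix.one_mulVec, Equiv.symm_apply_apply]
      simpa [f, g] using this
    have h1 : (1:ℝ) = ‖g (f e)‖ := by rw [hgf, he]
    have h2 : ‖g (f e)‖ ≤ ‖g‖ * Real.sqrt n := by
      calc ‖g (f e)‖ ≤ ‖g‖ * ‖f e‖ := g.le_opNorm _
        _ = ‖g‖ * Real.sqrt n := by rw [hnorm_fe]
    rw [div_le_iff₀ hsqrt]
    linarith
  -- combine
  have htpos : (0:ℝ) ≤ t ^ (n-1) := by positivity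
  have hcalc : t ^ (n-1) / Real.sqrt n ≤ ‖f‖ * ‖g‖ := by
    calc t ^ (n-1) / Real.sqrt n = t ^ (n-1) * (1 / Real.sqrt n) := by ring
      _ ≤ ‖f‖ * ‖g‖ := by
          apply mul_le_mul normA normB (by positivity) (le_trans htpos normA)
  exact hcalc
end

section
/- If 1/|s_i| ≥ ν > 1 for the first k knots s_0,…,s_{k-1} of an n×n Vandermonde matrix V_s (with k ≤ n), then σ_n(V_s) ≤ ν^{1−k}·√k·max{k, ν/(ν−1)}. -/
open Matrix Complex BigOperators Finset

lemma specNorm_le_frob {m n : ℕ} (A : Matrix (Fin m) (Fin n) ℂ) :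
    specNorm A ≤ Real.sqrt (∑ i, ∑ j, ‖A i j‖ ^ 2) := by
  have hS : (0:ℝ) ≤ ∑ i, ∑ j, ‖A i j‖ ^ 2 :=
    Finset.sum_nonneg fun i _ => Finset.sum_nonneg fun j _ => sq_nonneg _
  apply ContinuousLinearMap.opNorm_le_bound _ (Real.sqrt_nonneg _)
  intro x
  simp only [LinearMap.coe_toContinuousLinearMap']
  have key : ∀ i : Fin m, ‖toEuclideanLin A x i‖ ≤
      Real.sqrt (∑ j, ‖A i j‖ ^ 2) * ‖x‖ := by
    intro i
    set a : EuclideanSpace ℂ (Fin n) := (WithLp.equiv 2 _).symm (fun j => (starRingEnd ℂ) (A i j))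
    have h1 : toEuclideanLin A x i = inner ℂ a x := by
      rw [PiLp.inner_apply]
      simp only [toEuclideanLin_apply, a]
      simp [Matrix.mulVec, dotProduct, Equiv.refl_apply, Complex.conj_conj, mul_comm]
    have h2 : ‖a‖ = Real.sqrt (∑ j, ‖A i j‖ ^ 2) := by
      rw [EuclideanSpace.norm_eq]
      congr 1
      apply Finset.sum_congr rfl
      intro j _
      simp [a, Equiv.refl_apply, Complex.norm_conj]
    rw [h1, ← h2]
    exact norm_inner_le_norm a x
  rw [EuclideanSpace.norm_eq]
  have step : ∑ i : Fin m, ‖toEuclideanLin A x i‖ ^ 2 ≤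
      (∑ i, ∑ j, ‖A i j‖ ^ 2) * ‖x‖ ^ 2 := by
    rw [Finset.sum_mul]
    apply Finset.sum_le_sum
    intro i _
    have h := key i
    calc ‖toEuclideanLin A x i‖ ^ 2 ≤ (Real.sqrt (∑ j, ‖A i j‖ ^ 2) * ‖x‖) ^ 2 := by
          apply pow_le_pow_left₀ (norm_nonneg _) h
      _ = (∑ j, ‖A i j‖ ^ 2) * ‖x‖ ^ 2 := by
          rw [mul_pow, Real.sq_sqrt (Finset.sum_nonneg fun j _ => sq_nonneg _)]
  calc Real.sqrt (∑ i : Fin m, ‖toEuclideanLin A x i‖ ^ 2)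
      ≤ Real.sqrt ((∑ i, ∑ j, ‖A i j‖ ^ 2) * ‖x‖ ^ 2) := Real.sqrt_le_sqrt step
    _ = Real.sqrt (∑ i, ∑ j, ‖A i j‖ ^ 2) * ‖x‖ := by
        rw [Real.sqrt_mul hS, Real.sqrt_sq (norm_nonneg _)]

lemma rank_lt_of_zero_block {n k : ℕ} (hk : 1 ≤ k) (hkn : k ≤ n)
    (N : Matrix (Fin n) (Fin n) ℂ)
    (hzero : ∀ i j : Fin n, (i : ℕ) < k → k - 1 ≤ (j : ℕ) → N i j = 0) :
    N.rank < n := by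
  classical
  set g : (Fin (k-1) ⊕ Fin (n-k)) → (Fin n → ℂ) := fun t =>
    match t with
    | Sum.inl j => Pi.single (⟨j.val, by omega⟩ : Fin n) (1:ℂ)
    | Sum.inr i => N ⟨k + i.val, by omega⟩
  have hspan : Submodule.span ℂ (Set.range N) ≤ Submodule.span ℂ (Set.range g) := by
    rw [Submodule.span_le]
    rintro _ ⟨i, rfl⟩
    by_cases hi : (i : ℕ) < k
    · have : N i = ∑ j : Fin n, Pi.single j (N i j) := (Finset.univ_sum_single (N i)).symm
      rw [this]
      apply Submodule.sum_mem
      intro j _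
      by_cases hj : (j : ℕ) < k - 1
      · have : Pi.single j (N i j) = (N i j) • (Pi.single j (1:ℂ) : Fin n → ℂ) := by
          rw [← Pi.single_smul, smul_eq_mul, mul_one]
        rw [this]
        apply Submodule.smul_mem
        apply Submodule.subset_span
        exact ⟨Sum.inl ⟨j.val, hj⟩, by simp [g]⟩
      · rw [hzero i j hi (by omega), Pi.single_zero]
        exact Submodule.zero_mem _
    · apply Submodule.subset_span
      refine ⟨Sum.inr ⟨i.val - k, by omega⟩, ?_⟩
      show N ⟨k + (i.val - k), _⟩ = N i
      have he : (⟨k + (i.val - k), by omega⟩ : Fin n) = i := by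
        apply Fin.ext
        simp only []
        omega
      rw [he]
  have h1 : N.rank ≤ (k - 1) + (n - k) := by
    rw [Matrix.rank_eq_finrank_span_row]
    calc Module.finrank ℂ (Submodule.span ℂ (Set.range N))
        ≤ Module.finrank ℂ (Submodule.span ℂ (Set.range g)) := Submodule.finrank_mono hspan
      _ ≤ Fintype.card (Fin (k-1) ⊕ Fin (n-k)) := finrank_range_le_card g
      _ = (k - 1) + (n - k) := by simp
  omega

/-- If 1/|s_i| ≥ ν > 1 for the first k knots, then
σ_n(V_s) ≤ ν^{1−k}·√k·max{k, ν/(ν−1)}. -/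
theorem vandermonde_smallest_sv_small_knots (n k : ℕ) (hk : 1 ≤ k) (hkn : k ≤ n)
    (s : Fin n → ℂ) (ν : ℝ) (hν : 1 < ν)
    (hsmall : ∀ i : Fin n, (i : ℕ) < k → ν ≤ 1 / ‖s i‖) :
    singularValue n (Matrix.vandermonde s) ≤
      ν ^ ((1 : ℤ) - (k : ℤ)) * Real.sqrt k * max (k : ℝ) (ν / (ν - 1)) := by
  classical
  have hν0 : (0:ℝ) < ν := by linarith
  set A := Matrix.vandermonde s
  set M : Matrix (Fin n) (Fin n) ℂ := fun i j =>
    if (i:ℕ) < k ∧ k - 1 ≤ (j:ℕ) then s i ^ (j:ℕ) else 0 with hM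
  have hrank : (A - M).rank < n := by
    apply rank_lt_of_zero_block hk hkn
    intro i j hi hj
    have : k ≤ (j:ℕ) + 1 := by omega
    show A i j - M i j = 0
    simp [A, M, Matrix.vandermonde_apply, hi, hj, this]
  -- step 1 : singular value bounded by specNorm M
  have step1 : singularValue n A ≤ specNorm M := by
    have hbdd : BddBelow (Set.range fun N : {N : Matrix (Fin n) (Fin n) ℂ // N.rank < n} =>
        specNorm (A - N.1)) := ⟨0, by rintro x ⟨N, rfl⟩; exact norm_nonneg _⟩
    have := ciInf_le hbdd ⟨A - M, hrank⟩
    simpa [singularValue] using this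
  -- step 2 : frobenius bound
  have step2 : specNorm M ≤ Real.sqrt (∑ i, ∑ j, ‖M i j‖ ^ 2) :=
    specNorm_le_frob M
  set q : ℝ := (ν^2)⁻¹ with hq
  have hq0 : 0 < q := by positivity
  have hq1 : q < 1 := by
    rw [hq, inv_lt_one_iff₀]; right; nlinarith
  -- entrywise bound
  have hentry : ∀ i j : Fin n, ‖M i j‖ ^ 2 ≤
      if (i:ℕ) < k ∧ k - 1 ≤ (j:ℕ) then q ^ (j:ℕ) else 0 := by
    intro i j
    by_cases h : (i:ℕ) < k ∧ k - 1 ≤ (j:ℕ)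
    · simp only [hM, h, if_true]
      have hs := hsmall i h.1
      have habs : ‖s i‖ ≤ ν⁻¹ := by
        rcases eq_or_lt_of_le (norm_nonneg (s i)) with he | hpos
        · rw [← he]; positivity
        · rw [one_div] at hs
          calc ‖s i‖ = ((‖s i‖)⁻¹)⁻¹ := by rw [inv_inv]
            _ ≤ ν⁻¹ := by
                apply inv_anti₀ hν0 hs
      calc ‖s i ^ (j:ℕ)‖ ^ 2 = ((‖s i‖)^2) ^ (j:ℕ) := by
            rw [norm_pow]; ring
        _ ≤ q ^ (j:ℕ) := by
            apply pow_le_pow_left₀ (by positivity)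
            rw [hq]
            calc ‖s i‖ ^ 2 ≤ (ν⁻¹)^2 := by
                  apply pow_le_pow_left₀ (norm_nonneg _) habs
              _ = (ν^2)⁻¹ := by rw [inv_pow]
    · simp only [hM, h, if_false]
      simp
  -- sum bound
  have hgeo : ∀ N : ℕ, (∑ t ∈ Finset.range N, q ^ t) ≤ (1 - q)⁻¹ := by
    intro N
    have := Summable.sum_le_tsum (Finset.range N) (fun t _ => pow_nonneg hq0.le t)
      (summable_geometric_of_lt_one hq0.le hq1)
    rwa [tsum_geometric_of_lt_one hq0.le hq1] at this
  have hinner : ∀ i : Fin n, (∑ j, ‖M i j‖ ^ 2) ≤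
      if (i:ℕ) < k then q ^ (k-1) * (1-q)⁻¹ else 0 := by
    intro i
    by_cases hi : (i:ℕ) < k
    · simp only [hi, if_true]
      calc (∑ j, ‖M i j‖ ^ 2)
          ≤ ∑ j : Fin n, (if (i:ℕ) < k ∧ k - 1 ≤ (j:ℕ) then q ^ (j:ℕ) else 0) :=
            Finset.sum_le_sum fun j _ => hentry i j
        _ = ∑ j ∈ Finset.range n, (if k - 1 ≤ j then q ^ j else 0) := by
            simp only [hi, true_and]
            exact Fin.sum_univ_eq_sum_range (fun t => if k - 1 ≤ t then q ^ t else 0) n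
        _ = ∑ j ∈ (Finset.range n).filter (fun j => k - 1 ≤ j), q ^ j := by
            rw [Finset.sum_filter]
        _ = ∑ j ∈ Finset.Ico (k-1) n, q ^ j := by
            congr 1
            ext j
            simp only [Finset.mem_filter, Finset.mem_range, Finset.mem_Ico]
            omega
        _ = ∑ t ∈ Finset.range (n - (k-1)), q ^ (k - 1 + t) := by
            rw [Finset.sum_Ico_eq_sum_range]
        _ = q ^ (k-1) * ∑ t ∈ Finset.range (n - (k-1)), q ^ t := by
            rw [Finset.mul_sum]
            apply Finset.sum_congr rfl
            intro t _
            rw [pow_add]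
        _ ≤ q ^ (k-1) * (1-q)⁻¹ := by
            apply mul_le_mul_of_nonneg_left (hgeo _) (by positivity)
    · simp only [hi, if_false]
      apply le_of_eq
      apply Finset.sum_eq_zero
      intro j _
      simp [hM, hi]
  have hsum : (∑ i, ∑ j, ‖M i j‖ ^ 2) ≤ k * (q ^ (k-1) * (1-q)⁻¹) := by
    calc (∑ i, ∑ j, ‖M i j‖ ^ 2)
        ≤ ∑ i : Fin n, (if (i:ℕ) < k then q ^ (k-1) * (1-q)⁻¹ else 0) :=
          Finset.sum_le_sum fun i _ => hinner i
      _ = ∑ i ∈ Finset.range n, (if i < k then q ^ (k-1) * (1-q)⁻¹ else 0) :=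
          Fin.sum_univ_eq_sum_range (fun i => if i < k then q ^ (k-1) * (1-q)⁻¹ else 0) n
      _ = ∑ i ∈ (Finset.range n).filter (fun i => i < k), q ^ (k-1) * (1-q)⁻¹ := by
          rw [Finset.sum_filter]
      _ = ∑ i ∈ Finset.range k, q ^ (k-1) * (1-q)⁻¹ := by
          congr 1
          ext i
          simp only [Finset.mem_filter, Finset.mem_range]
          omega
      _ = k * (q ^ (k-1) * (1-q)⁻¹) := by
          rw [Finset.sum_const, Finset.card_range, nsmul_eq_mul]
  -- arithmetic: compare to T^2
  set T : ℝ := ν ^ ((1:ℤ) - (k:ℤ)) * Real.sqrt k * (ν/(ν-1)) with hT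
  have hzp : ν ^ ((1:ℤ) - (k:ℤ)) = (ν ^ (k-1))⁻¹ := by
    rw [show (1:ℤ) - (k:ℤ) = -((k-1:ℕ):ℤ) by push_cast; omega, _root_.zpow_neg, zpow_natCast]
  have hc : (0:ℝ) < ν ^ (k-1) := by positivity
  have hT0 : 0 ≤ T := by
    rw [hT, hzp]
    have hdd : (0:ℝ) ≤ ν / (ν - 1) := by
      apply div_nonneg hν0.le; linarith
    exact mul_nonneg (mul_nonneg (by positivity) (Real.sqrt_nonneg _)) hdd
  have hS'T : (k:ℝ) * (q ^ (k-1) * (1-q)⁻¹) ≤ T ^ 2 := by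
    have hq' : q ^ (k-1) = ((ν ^ (k-1))^2)⁻¹ := by
      rw [hq, ← inv_pow, ← pow_mul, ← pow_mul, Nat.mul_comm, inv_pow]
    have h1q : (1 - q)⁻¹ = ν^2 / (ν^2 - 1) := by
      rw [hq]
      have hne : (ν:ℝ)^2 ≠ 0 := by positivity
      rw [show (1:ℝ) - (ν^2)⁻¹ = (ν^2 - 1) / ν^2 by field_simp]
      rw [inv_div]
    have hkey : ν^2 / (ν^2 - 1) ≤ (ν / (ν - 1))^2 := by
      rw [div_pow, div_le_div_iff₀ (by nlinarith) (by nlinarith)]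
      nlinarith
    have hT2 : T ^ 2 = ((ν ^ (k-1))^2)⁻¹ * k * (ν / (ν-1))^2 := by
      rw [hT, hzp, mul_pow, mul_pow, Real.sq_sqrt (Nat.cast_nonneg k)]; ring
    rw [hT2, hq', h1q]
    have hfac : (0:ℝ) ≤ (k:ℝ) * ((ν ^ (k-1))^2)⁻¹ := by positivity
    calc (k:ℝ) * (((ν ^ (k-1))^2)⁻¹ * (ν^2 / (ν^2 - 1)))
        ≤ (k:ℝ) * (((ν ^ (k-1))^2)⁻¹ * (ν / (ν - 1))^2) := by
          apply mul_le_mul_of_nonneg_left _ (Nat.cast_nonneg k)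
          apply mul_le_mul_of_nonneg_left hkey (by positivity)
      _ = ((ν ^ (k-1))^2)⁻¹ * k * (ν / (ν-1))^2 := by ring
  have step3 : Real.sqrt (∑ i, ∑ j, ‖M i j‖ ^ 2) ≤ T := by
    calc Real.sqrt (∑ i, ∑ j, ‖M i j‖ ^ 2)
        ≤ Real.sqrt (T ^ 2) := Real.sqrt_le_sqrt (hsum.trans hS'T)
      _ = T := Real.sqrt_sq hT0
  calc singularValue n A ≤ specNorm M := step1
    _ ≤ Real.sqrt (∑ i, ∑ j, ‖M i j‖ ^ 2) := step2
    _ ≤ T := step3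
    _ ≤ ν ^ ((1 : ℤ) - (k : ℤ)) * Real.sqrt k * max (k : ℝ) (ν / (ν - 1)) := by
        rw [hT]
        apply mul_le_mul_of_nonneg_left (le_max_right _ _)
        rw [hzp]
        positivity
end

section
/- The determinant of the n×n Cauchy matrix C_{s,t} = (1/(s_i − t_j))_{i,j=0}^{n-1} equals ∏_{i<j}(s_j − s_i)(t_i − t_j) / ∏_{i,j}(s_i − t_j). -/
open Matrix Complex BigOperators Finset

/-- Cauchy determinant formula:
det C_{s,t} = ∏_{i<j}(s_j − s_i)(t_i − t_j) / ∏_{i,j}(s_i − t_j). -/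
theorem cauchy_det (n : ℕ) (s t : Fin n → ℂ)
    (hs : Function.Injective s) (ht : Function.Injective t)
    (hst : ∀ i j, s i ≠ t j) :
    (Matrix.of fun i j : Fin n => 1 / (s i - t j)).det =
      (∏ i : Fin n, ∏ j ∈ Finset.Ioi i, (s j - s i) * (t i - t j)) /
        ∏ i : Fin n, ∏ j : Fin n, (s i - t j) := by
  induction n with
  | zero => simp [Matrix.det_fin_zero]
  | succ n ih =>
    have hst' : ∀ i j, s i - t j ≠ 0 := fun i j => sub_ne_zero.mpr (hst i j)
    -- Step 1: column operation (subtract column 0), via transpose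
    have step1 :
        (Matrix.of fun i j : Fin (n+1) => 1 / (s i - t j)).det =
        (Matrix.of fun i j : Fin (n+1) =>
          Fin.cases (1 / (s j - t 0))
            (fun i' => (t i'.succ - t 0) / ((s j - t i'.succ) * (s j - t 0))) i).det := by
      rw [← Matrix.det_transpose (Matrix.of fun i j : Fin (n+1) => 1 / (s i - t j))]
      apply det_eq_of_forall_row_eq_smul_add_const
        (Fin.cases 0 (fun _ => 1) : Fin (n+1) → ℂ) 0 (by simp)
      intro i j
      refine Fin.cases ?_ (fun i' => ?_) i
      · simp
      · simp only [transpose_apply, of_apply, Fin.cases_succ, Fin.cases_zero, one_mul]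
        field_simp [hst']
        ring
    -- Step 2+3: factor rows and columns
    have step2 :
        (Matrix.of fun i j : Fin (n+1) =>
          Fin.cases (1 / (s j - t 0))
            (fun i' => (t i'.succ - t 0) / ((s j - t i'.succ) * (s j - t 0))) i).det =
        (∏ i : Fin (n+1), (s i - t 0)⁻¹) *
          ((∏ j : Fin (n+1), (Fin.cases 1 (fun j' => -(t 0 - t j'.succ)) j : ℂ)) *
            (Matrix.of fun i j : Fin (n+1) =>
              (Fin.cases 1 (fun j' => 1 / (s i - t j'.succ)) j : ℂ)).det) := by
      rw [← Matrix.det_transpose]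
      rw [show (Matrix.of fun i j : Fin (n+1) =>
          Fin.cases (1 / (s j - t 0))
            (fun i' => (t i'.succ - t 0) / ((s j - t i'.succ) * (s j - t 0))) i)ᵀ
        = Matrix.of fun i j : Fin (n+1) => (s i - t 0)⁻¹ *
            ((Fin.cases 1 (fun j' => -(t 0 - t j'.succ)) j : ℂ) *
              (Matrix.of fun i j : Fin (n+1) =>
                (Fin.cases 1 (fun j' => 1 / (s i - t j'.succ)) j : ℂ)) i j) from ?_]
      · refine (Matrix.det_mul_column (v := fun i => (s i - t 0)⁻¹) (A := Matrix.of fun i j : Fin (n+1) => (Fin.cases 1 (fun j' => -(t 0 - t j'.succ)) j : ℂ) *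
          (Matrix.of fun i j : Fin (n+1) => (Fin.cases 1 (fun j' => 1 / (s i - t j'.succ)) j : ℂ)) i j)).trans ?_
        congr 1
        exact Matrix.det_mul_row _ _
      · ext i j
        refine Fin.cases ?_ (fun j' => ?_) j
        · simp
        · simp only [transpose_apply, of_apply, Fin.cases_succ]
          simp only [div_eq_mul_inv, one_div, mul_inv]
          ring
    -- Step 4: row operation (subtract row 0)
    have step4 :
        (Matrix.of fun i j : Fin (n+1) =>
          (Fin.cases 1 (fun j' => 1 / (s i - t j'.succ)) j : ℂ)).det =
        (Matrix.of fun i j : Fin (n+1) =>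
          (Fin.cases ((Fin.cases 1 (fun j' => 1 / (s 0 - t j'.succ)) j : ℂ))
            (fun i' => (Fin.cases 0
              (fun j' => (s 0 - s i'.succ) /
                ((s i'.succ - t j'.succ) * (s 0 - t j'.succ))) j : ℂ)) i)).det := by
      apply det_eq_of_forall_row_eq_smul_add_const
        (Fin.cases 0 (fun _ => 1) : Fin (n+1) → ℂ) 0 (by simp)
      intro i j
      refine Fin.cases ?_ (fun i' => ?_) i
      · simp
      · refine Fin.cases ?_ (fun j' => ?_) j
        · simp
        · simp only [of_apply, Fin.cases_succ, Fin.cases_zero, one_mul]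
          field_simp [hst']
          ring
    -- Step 5: expand along column 0
    have step5 :
        (Matrix.of fun i j : Fin (n+1) =>
          (Fin.cases ((Fin.cases 1 (fun j' => 1 / (s 0 - t j'.succ)) j : ℂ))
            (fun i' => (Fin.cases 0
              (fun j' => (s 0 - s i'.succ) /
                ((s i'.succ - t j'.succ) * (s 0 - t j'.succ))) j : ℂ)) i)).det =
        (Matrix.of fun i j : Fin n =>
          (s 0 - s i.succ) / ((s i.succ - t j.succ) * (s 0 - t j.succ))).det := by
      rw [Matrix.det_succ_column_zero, Fin.sum_univ_succ]
      simp [Matrix.submatrix, Fin.succAbove_zero]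
    -- Step 6: factor rows and columns of the minor, and apply IH
    have step6 :
        (Matrix.of fun i j : Fin n =>
          (s 0 - s i.succ) / ((s i.succ - t j.succ) * (s 0 - t j.succ))).det =
        (∏ j : Fin n, -(s 0 - t j.succ)⁻¹) * ((∏ i : Fin n, (s i.succ - s 0)) *
          (Matrix.of fun i j : Fin n => 1 / (s i.succ - t j.succ)).det) := by
      rw [show (Matrix.of fun i j : Fin n =>
          (s 0 - s i.succ) / ((s i.succ - t j.succ) * (s 0 - t j.succ)))
        = Matrix.of fun i j : Fin n => (-(s 0 - t j.succ)⁻¹) *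
            ((s i.succ - s 0) *
              (Matrix.of fun i j : Fin n => 1 / (s i.succ - t j.succ)) i j) from ?_]
      · refine (Matrix.det_mul_row (v := fun j : Fin n => -(s 0 - t j.succ)⁻¹) (A := Matrix.of fun i j : Fin n => (s i.succ - s 0) *
          (Matrix.of fun i j : Fin n => 1 / (s i.succ - t j.succ)) i j)).trans ?_
        congr 1
        exact Matrix.det_mul_column _ _
      · ext i j
        simp only [of_apply, div_eq_mul_inv, one_div, mul_inv]
        ring
    have ih' : (Matrix.of fun i j : Fin n => 1 / (s i.succ - t j.succ)).det =
        (∏ i : Fin n, ∏ j ∈ Finset.Ioi i, (s j.succ - s i.succ) * (t i.succ - t j.succ)) /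
          ∏ i : Fin n, ∏ j : Fin n, (s i.succ - t j.succ) := by
      simpa using ih (s ∘ Fin.succ) (t ∘ Fin.succ)
        (fun a b h => Fin.succ_injective n (hs h))
        (fun a b h => Fin.succ_injective n (ht h))
        (fun i j => hst i.succ j.succ)
    rw [step1, step2, step4, step5, step6, ih']
    -- Now pure algebra: split the RHS products
    rw [Fin.prod_univ_succ (fun i => ∏ j ∈ Finset.Ioi i, (s j - s i) * (t i - t j))]
    rw [Fin.prod_Ioi_zero]
    conv_rhs => rw [Finset.prod_congr rfl
      (fun (i : Fin n) _ => (Fin.prod_Ioi_succ (fun j => (s j - s i.succ) * (t i.succ - t j)) i))]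
    rw [Fin.prod_univ_succ (fun i => ∏ j : Fin (n+1), (s i - t j))]
    conv_rhs => rw [Finset.prod_congr rfl
      (fun (i : Fin n) _ => (Fin.prod_univ_succ (fun j => (s i.succ - t j))))]
    rw [Finset.prod_mul_distrib, Finset.prod_mul_distrib,
      Fin.prod_univ_succ (fun j => (s 0 - t j))]
    -- collect signs
    have hsign : (∏ j : Fin (n+1), (Fin.cases 1 (fun j' => -(t 0 - t j'.succ)) j : ℂ)) *
        (∏ j : Fin n, -(s 0 - t j.succ)⁻¹) =
        (∏ j : Fin n, (t 0 - t j.succ)) * (∏ j : Fin n, (s 0 - t j.succ))⁻¹ := by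
      rw [Fin.prod_univ_succ, ← Finset.prod_inv_distrib]
      simp only [Fin.cases_zero, Fin.cases_succ, one_mul, ← Finset.prod_mul_distrib]
      congr 1; ext j; ring
    rw [Fin.prod_univ_succ (fun i => (s i - t 0)⁻¹)]
    simp only [div_eq_mul_inv, mul_inv, Finset.prod_inv_distrib] at hsign ⊢
    linear_combination ((s 0 - t 0)⁻¹ * (∏ i : Fin n, (s i.succ - t 0))⁻¹ *
      (∏ i : Fin n, (s i.succ - s 0)) *
      (∏ i : Fin n, ∏ j ∈ Finset.Ioi i, (s j.succ - s i.succ) * (t i.succ - t j.succ)) *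
      (∏ i : Fin n, ∏ j : Fin n, (s i.succ - t j.succ))⁻¹) * hsign
end

section
/- The Vandermonde–Cauchy factorization holds: V_s = D · C_{s,t} · D_1^{-1} · V_t, where D = diag(t(s_i))_{i=0}^{n-1}, D_1 = diag(t'(t_j))_{j=0}^{n-1}, and t(x) = ∏_{j}(x − t_j). -/
open Matrix Complex BigOperators Finset

/-- Vandermonde–Cauchy factorization: V_s = D·C_{s,t}·D₁⁻¹·V_t, where
D = diag(t(s_i)), D₁ = diag(t'(t_j)), t(x) = ∏_j (x − t_j). -/
theorem vandermonde_cauchy_factorization (n : ℕ) (s t : Fin n → ℂ)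
    (ht : Function.Injective t) (hst : ∀ i j, s i ≠ t j) :
    Matrix.vandermonde s =
      Matrix.diagonal (fun i : Fin n =>
          (∏ j : Fin n, (Polynomial.X - Polynomial.C (t j))).eval (s i)) *
        (Matrix.of fun i j : Fin n => 1 / (s i - t j)) *
        (Matrix.diagonal fun j : Fin n =>
          (Polynomial.derivative (∏ j : Fin n, (Polynomial.X - Polynomial.C (t j)))).eval
            (t j))⁻¹ *
        Matrix.vandermonde t := by
  have hin : Set.InjOn t (Finset.univ : Finset (Fin n)) := fun a _ b _ h => ht h
  have hnodal : Lagrange.nodal Finset.univ t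
      = ∏ j : Fin n, (Polynomial.X - Polynomial.C (t j)) := rfl
  have hDer : ∀ j : Fin n,
      (Polynomial.derivative (∏ j : Fin n, (Polynomial.X - Polynomial.C (t j)))).eval (t j) ≠ 0 := by
    intro j
    rw [← hnodal, Lagrange.eval_nodal_derivative_eval_node_eq (Finset.mem_univ j)]
    exact Lagrange.eval_nodal_not_at_node fun m hm =>
      fun h => (Finset.mem_erase.mp hm).1 (ht h.symm)
  have hDinv : (Matrix.diagonal fun j : Fin n =>
      (Polynomial.derivative (∏ j : Fin n, (Polynomial.X - Polynomial.C (t j)))).eval (t j))⁻¹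
      = Matrix.diagonal fun j : Fin n =>
        ((Polynomial.derivative (∏ j : Fin n, (Polynomial.X - Polynomial.C (t j)))).eval (t j))⁻¹ := by
    apply Matrix.inv_eq_right_inv
    rw [Matrix.diagonal_mul_diagonal]
    convert Matrix.diagonal_one
    exact mul_inv_cancel₀ (hDer _)
  ext i k
  rw [hDinv]
  rw [Matrix.mul_apply]
  simp only [Matrix.mul_diagonal, Matrix.diagonal_mul,
    Matrix.vandermonde_apply, Matrix.of_apply]
  have hdeg : (Polynomial.X ^ (k : ℕ) : Polynomial ℂ).degree
      < ((Finset.univ : Finset (Fin n)).card : WithBot ℕ) := by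
    rw [Polynomial.degree_X_pow, Finset.card_univ, Fintype.card_fin]
    exact_mod_cast k.isLt
  have key := congrArg (Polynomial.eval (s i))
    (Lagrange.eq_interpolate (f := (Polynomial.X ^ (k : ℕ) : Polynomial ℂ)) hin hdeg)
  rw [Lagrange.eval_interpolate_not_at_node _ (fun j _ => hst i j)] at key
  simp only [Polynomial.eval_pow, Polynomial.eval_X] at key
  rw [key, hnodal, Finset.mul_sum]
  refine Finset.sum_congr rfl fun j _ => ?_
  rw [Lagrange.nodalWeight_eq_eval_derivative_nodal (Finset.mem_univ j), hnodal]
  field_simp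
end

section
/- With t_j = f·ω_n^j for a complex f with |f| = 1 (so t(x) = x^n − f^n), the inverse of a nonsingular Vandermonde matrix satisfies V_s^{-1} = diag(f^{n−1−j})_j · Ω^H · diag(ω_n^{−j})_j · C_{s,f}^{-1} · diag(1/(s_i^n − f^n))_i, where C_{s,f} = (1/(s_i − fω_n^j))_{i,j} and Ω is the DFT matrix. -/
open Matrix Complex BigOperators Finset

/-- Inversion formula for a Vandermonde matrix via the CV (Cauchy–Vandermonde)
matrix with knots t_j = f·ω_n^j, |f| = 1:
V_s⁻¹ = diag(f^{n−1−j})·Ωᴴ·diag(ω_n^{−j})·C_{s,f}⁻¹·diag(1/(s_i^n − f^n)). -/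
theorem vandermonde_inverse_formula (n : ℕ) (hn : 0 < n) (s : Fin n → ℂ)
    (hdet : (Matrix.vandermonde s).det ≠ 0) (f : ℂ) (hf : ‖f‖ = 1)
    (ω : ℂ) (hω : ω = Complex.exp (2 * Real.pi * Complex.I / n))
    (hknots : ∀ i : Fin n, s i ^ n ≠ f ^ n) :
    (Matrix.vandermonde s)⁻¹ =
      Matrix.diagonal (fun j : Fin n => f ^ (n - 1 - (j : ℕ))) *
        (Matrix.of fun i j : Fin n => ω ^ ((i : ℕ) * (j : ℕ)))ᴴ *
        Matrix.diagonal (fun j : Fin n => ω⁻¹ ^ (j : ℕ)) *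
        (Matrix.of fun i j : Fin n => 1 / (s i - f * ω ^ (j : ℕ)))⁻¹ *
        Matrix.diagonal (fun i : Fin n => (s i ^ n - f ^ n)⁻¹) := by
  have hprim : IsPrimitiveRoot ω n := hω ▸ Complex.isPrimitiveRoot_exp n hn.ne'
  have hωn : ω ^ n = 1 := hprim.pow_eq_one
  have hω0 : ω ≠ 0 := fun h => by simp [h, zero_pow hn.ne'] at hωn
  have hf0 : f ≠ 0 := fun h => by simp [h] at hf
  have habsω : ‖ω‖ = 1 := by
    rw [hω]
    have h2 : (2 * Real.pi * Complex.I / n) = ((2 * Real.pi / n : ℝ) : ℂ) * Complex.I := by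
      push_cast; ring
    rw [h2, Complex.norm_exp_ofReal_mul_I]
  have hstar : star ω = ω⁻¹ :=
    (Complex.inv_eq_conj (by exact habsω)).symm
  have hsn : ∀ i : Fin n, s i ^ n - f ^ n ≠ 0 := fun i => sub_ne_zero.mpr (hknots i)
  have hne : ∀ (i j : Fin n), s i - f * ω ^ (j : ℕ) ≠ 0 := by
    intro i j h
    rw [sub_eq_zero] at h
    apply hknots i
    rw [h, mul_pow, ← pow_mul, mul_comm (j : ℕ) n, pow_mul, hωn, one_pow, mul_one]
  set V := Matrix.vandermonde s with hV
  set D := Matrix.diagonal (fun i : Fin n => (s i ^ n - f ^ n)⁻¹) with hD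
  set M := Matrix.diagonal (fun j : Fin n => f ^ (n - 1 - (j : ℕ))) *
      (Matrix.of fun i j : Fin n => ω ^ ((i : ℕ) * (j : ℕ)))ᴴ *
      Matrix.diagonal (fun j : Fin n => ω⁻¹ ^ (j : ℕ)) with hM
  set C := (Matrix.of fun i j : Fin n => 1 / (s i - f * ω ^ (j : ℕ))) with hCdef
  -- the key identity: C = D * V * M
  have hC : C = D * V * M := by
    ext i j
    have h1 : (D * V * M) i j =
        ∑ k : Fin n, (s i ^ n - f ^ n)⁻¹ * s i ^ (k : ℕ) *
          (f ^ (n - 1 - (k : ℕ)) * star (ω ^ ((k : ℕ) * (j : ℕ))) * ω⁻¹ ^ (j : ℕ)) := by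
      rw [hM, hD, hV, Matrix.mul_apply]
      refine Finset.sum_congr rfl fun k _ => ?_
      rw [Matrix.diagonal_mul, Matrix.mul_diagonal, Matrix.diagonal_mul,
        Matrix.conjTranspose_apply, Matrix.vandermonde_apply, Matrix.of_apply]
      ring_nf
    rw [h1]
    -- rewrite each term
    have h2 : ∀ k : Fin n,
        (s i ^ n - f ^ n)⁻¹ * s i ^ (k : ℕ) *
          (f ^ (n - 1 - (k : ℕ)) * star (ω ^ ((k : ℕ) * (j : ℕ))) * ω⁻¹ ^ (j : ℕ)) =
        (s i ^ n - f ^ n)⁻¹ * (s i ^ (k : ℕ) * (f * ω ^ (j : ℕ)) ^ (n - 1 - (k : ℕ))) := by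
      intro k
      have hk : (k : ℕ) < n := k.2
      have hsum : (n - 1 - (k : ℕ)) + ((k : ℕ) + 1) = n := by omega
      have e1 : (j : ℕ) * (n - 1 - (k : ℕ)) + ((k : ℕ) * (j : ℕ) + (j : ℕ)) = n * (j : ℕ) := by
        calc (j : ℕ) * (n - 1 - (k : ℕ)) + ((k : ℕ) * (j : ℕ) + (j : ℕ))
            = ((n - 1 - (k : ℕ)) + ((k : ℕ) + 1)) * (j : ℕ) := by ring
          _ = n * (j : ℕ) := by rw [hsum]
      have key : ω ^ ((j : ℕ) * (n - 1 - (k : ℕ))) * (ω ^ ((k : ℕ) * (j : ℕ)) * ω ^ (j : ℕ)) = 1 := by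
        rw [← pow_add, ← pow_add, e1, pow_mul, hωn, one_pow]
      have hstarpow : star (ω ^ ((k : ℕ) * (j : ℕ))) = (ω ^ ((k : ℕ) * (j : ℕ)))⁻¹ := by
        rw [star_pow, hstar, inv_pow]
      have hX : (ω ^ ((k : ℕ) * (j : ℕ)) * ω ^ (j : ℕ))⁻¹ = ω ^ ((j : ℕ) * (n - 1 - (k : ℕ))) :=
        inv_eq_of_mul_eq_one_left key
      rw [hstarpow, mul_pow, ← pow_mul, ← hX]
      ring
    rw [Finset.sum_congr rfl fun k _ => h2 k, ← Finset.mul_sum]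
    -- geometric sum
    have hgeom : (∑ k : Fin n, s i ^ (k : ℕ) * (f * ω ^ (j : ℕ)) ^ (n - 1 - (k : ℕ))) *
        (s i - f * ω ^ (j : ℕ)) = s i ^ n - f ^ n := by
      rw [Fin.sum_univ_eq_sum_range (fun k => s i ^ k * (f * ω ^ (j : ℕ)) ^ (n - 1 - k)) n,
        geom_sum₂_mul]
      congr 1
      rw [mul_pow, ← pow_mul, mul_comm (j : ℕ) n, pow_mul, hωn, one_pow, mul_one]
    rw [hCdef, Matrix.of_apply, one_div, eq_comm]
    exact eq_inv_of_mul_eq_one_left (by rw [mul_assoc, hgeom, inv_mul_cancel₀ (hsn i)])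
  have hdetD : D.det ≠ 0 := by
    rw [hD, Matrix.det_diagonal]
    exact Finset.prod_ne_zero_iff.mpr fun i _ => inv_ne_zero (hsn i)
  have hΩ : (Matrix.of fun i j : Fin n => ω ^ ((i : ℕ) * (j : ℕ))) =
      Matrix.vandermonde (fun i : Fin n => ω ^ (i : ℕ)) := by
    ext i j
    simp [Matrix.vandermonde_apply, pow_mul]
  have hdetΩ : (Matrix.of fun i j : Fin n => ω ^ ((i : ℕ) * (j : ℕ))).det ≠ 0 := by
    rw [hΩ, Matrix.det_vandermonde_ne_zero_iff]
    intro a b h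
    exact Fin.ext (hprim.pow_inj a.2 b.2 h)
  have hdetM : M.det ≠ 0 := by
    rw [hM, Matrix.det_mul, Matrix.det_mul, Matrix.det_conjTranspose,
      Matrix.det_diagonal, Matrix.det_diagonal]
    refine mul_ne_zero (mul_ne_zero ?_ ?_) ?_
    · exact Finset.prod_ne_zero_iff.mpr fun i _ => pow_ne_zero _ hf0
    · exact star_ne_zero.mpr hdetΩ
    · exact Finset.prod_ne_zero_iff.mpr fun i _ => pow_ne_zero _ (inv_ne_zero hω0)
  rw [hC, Matrix.mul_inv_rev (D * V) M, Matrix.mul_inv_rev D V, ← Matrix.mul_assoc M,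
    Matrix.mul_nonsing_inv M (isUnit_iff_ne_zero.mpr hdetM), Matrix.one_mul,
    Matrix.mul_assoc, Matrix.nonsing_inv_mul D (isUnit_iff_ne_zero.mpr hdetD), Matrix.mul_one]
end
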